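/- Let α ∈ (1/2,1) and let λ, μ, ν, u be complex numbers. Then there exist constants C > 0, θ > 0 and ρ > 0 such that the doubly indexed coefficients satisfy |a_{k,ℓ}| ≤ C·θ^{ℓ}·ρ^{k}·(k − k(ℓ) + 1)^{α/2 − 1}·(max(ℓ,1))^{α/2 − 1} for every ℓ ≥ 0 and every k ≥ k(ℓ). Consequently there exists R > 0 such that for every t ∈ (0,R) the doubly indexed series Σ_{ℓ≥0} Σ_{k≥k(ℓ)} |a_{k,ℓ}| · t^{αk−ℓ} converges. -/

import Mathlib

open Finset

/-- Valuation `k(ℓ) = max(2ℓ−1, 1)` (case `α ∈ (1/2,1)`). -/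
def kval (l : ℕ) : ℕ := max (2 * l - 1) 1

/-- The double discrete convolution
`a*²_{m,ℓ} = ∑_{k₁+k₂=m, ℓ₁+ℓ₂=ℓ, kᵢ≥1, ℓᵢ≥0} a_{k₁,ℓ₁} a_{k₂,ℓ₂}`. -/
noncomputable def dconv (a : ℕ → ℕ → ℂ) (m l : ℕ) : ℂ :=
  ∑ k₁ ∈ Finset.Ico 1 m, ∑ l₁ ∈ Finset.range (l + 1), a k₁ l₁ * a (m - k₁) (l - l₁)

/-- The doubly indexed coefficients `a_{k,ℓ}` of the non-homogeneous fractional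
Riccati equation, case `α ∈ (1/2,1)` with initial condition `u`. -/
def IsDoubleRiccatiSeq (α : ℝ) (lam mu nu u : ℂ) (a : ℕ → ℕ → ℂ) : Prop :=
  a 1 0 = nu / (Real.Gamma (α + 1) : ℂ) ∧
  a 1 1 = u / (Real.Gamma α : ℂ) ∧
  (∀ l : ℕ, 2 ≤ l → a 1 l = 0) ∧
  (∀ k l : ℕ, k < kval l → a k l = 0) ∧
  (∀ l k : ℕ, max (kval l) 2 ≤ k →
    a k l = (mu * a (k - 1) l + lam * dconv a (k - 1) l) *
      ((Real.Gamma (α * ((k:ℝ) - 1) - (l:ℝ) + 1) / Real.Gamma (α * (k:ℝ) - (l:ℝ) + 1) : ℝ) : ℂ))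



lemma sum_inv_sq_le (n : ℕ) : ∑ i ∈ Finset.range n, (1:ℝ)/((i:ℝ)+1)^2 ≤ 2 := by
  have key : ∀ n : ℕ, ∑ i ∈ Finset.range n, (1:ℝ)/((i:ℝ)+1)^2 ≤ 2 - 2/((n:ℝ)+1) := by
    intro n
    induction n with
    | zero => norm_num
    | succ n ih =>
      rw [Finset.sum_range_succ]
      have h1 : (0:ℝ) < (n:ℝ) + 1 := by positivity
      have h2 : (0:ℝ) < (n:ℝ) + 2 := by positivity
      have : (1:ℝ)/((n:ℝ)+1)^2 ≤ 2/((n:ℝ)+1) - 2/((n:ℝ)+2) := by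
        rw [div_sub_div _ _ (ne_of_gt h1) (ne_of_gt h2), div_le_div_iff₀ (by positivity) (by positivity)]
        ring_nf
        nlinarith [h1, h2]
      have e : ((n:ℝ)+1)+1 = (n:ℝ)+2 := by ring
      push_cast
      rw [e]
      linarith [ih]
  have := key n
  have : (0:ℝ) < 2/((n:ℝ)+1) := by positivity
  linarith [key n]

lemma conv_sum_le (m : ℕ) :
    ∑ i ∈ Finset.range (m+1), (1:ℝ)/((((i:ℕ):ℝ)+1)^2*(((m-i:ℕ):ℝ)+1)^2)
      ≤ 16/((m:ℝ)+2)^2 := by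
  have hterm : ∀ i ∈ Finset.range (m+1),
      (1:ℝ)/((((i:ℕ):ℝ)+1)^2*(((m-i:ℕ):ℝ)+1)^2)
        ≤ 4/((m:ℝ)+2)^2 * (1/(((i:ℕ):ℝ)+1)^2 + 1/(((m-i:ℕ):ℝ)+1)^2) := by
    intro i hi
    have hi' : i ≤ m := Nat.lt_succ_iff.mp (Finset.mem_range.mp hi)
    set A : ℝ := ((i:ℕ):ℝ) + 1 with hA
    set B : ℝ := ((m-i:ℕ):ℝ) + 1 with hB
    have hA0 : (0:ℝ) < A := by positivity
    have hB0 : (0:ℝ) < B := by positivity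
    have hAB : A + B = (m:ℝ) + 2 := by
      rw [hA, hB]
      have : ((m-i:ℕ):ℝ) = (m:ℝ) - (i:ℝ) := by
        rw [Nat.cast_sub hi']
      rw [this]; ring
    rw [← hAB]
    rw [div_le_iff₀ (by positivity)]
    have expand : 4/(A+B)^2 * (1/A^2 + 1/B^2) * (A^2 * B^2)
        = 4 * (A^2 + B^2) / (A+B)^2 := by
      field_simp
      ring
    rw [expand]
    rw [le_div_iff₀ (by positivity)]
    nlinarith [sq_nonneg (A - B), sq_nonneg (A+B)]
  calc ∑ i ∈ Finset.range (m+1), (1:ℝ)/((((i:ℕ):ℝ)+1)^2*(((m-i:ℕ):ℝ)+1)^2)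
      ≤ ∑ i ∈ Finset.range (m+1), 4/((m:ℝ)+2)^2 * (1/(((i:ℕ):ℝ)+1)^2 + 1/(((m-i:ℕ):ℝ)+1)^2) :=
        Finset.sum_le_sum hterm
    _ = 4/((m:ℝ)+2)^2 * ((∑ i ∈ Finset.range (m+1), 1/(((i:ℕ):ℝ)+1)^2)
        + ∑ i ∈ Finset.range (m+1), 1/(((m-i:ℕ):ℝ)+1)^2) := by
        rw [← Finset.mul_sum, Finset.sum_add_distrib]
    _ ≤ 4/((m:ℝ)+2)^2 * (2 + 2) := by
        have h1 := sum_inv_sq_le (m+1)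
        have h2 : ∑ i ∈ Finset.range (m+1), (1:ℝ)/(((m-i:ℕ):ℝ)+1)^2
            = ∑ i ∈ Finset.range (m+1), (1:ℝ)/(((i:ℕ):ℝ)+1)^2 := by
          have := Finset.sum_range_reflect (fun j => (1:ℝ)/(((j:ℕ):ℝ)+1)^2) (m+1)
          simpa using this
        rw [h2]
        have hpos : (0:ℝ) < 4/((m:ℝ)+2)^2 := by positivity
        nlinarith [h1]
    _ = 16/((m:ℝ)+2)^2 := by ring

lemma gamma_ratio_le (α x : ℝ) (hα0 : 1/2 < α) (hα1 : α < 1) (hx : 2*α-1 ≤ x) :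
    Real.Gamma x / Real.Gamma (x+α) ≤ (1+α/(2*α-1))*(1+α) := by
  have hm : (0:ℝ) < 2*α-1 := by linarith
  have hx0 : (0:ℝ) < x := lt_of_lt_of_le hm hx
  have hxα : (0:ℝ) < x + α := by linarith
  have hGa : (0:ℝ) < Real.Gamma (x+α) := Real.Gamma_pos_of_pos hxα
  have hG2 : Real.Gamma (x+2) ≤ Real.Gamma (x+α+2) := by
    apply StrictMonoOn.monotoneOn Real.Gamma_strictMonoOn_Ici
    · simp only [Set.mem_Ici]; linarith
    · simp only [Set.mem_Ici]; linarith
    · linarith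
  have e1 : Real.Gamma (x+2) = (x+1)*x*Real.Gamma x := by
    have h1 : Real.Gamma ((x+1)+1) = (x+1)*Real.Gamma (x+1) :=
      Real.Gamma_add_one (by positivity)
    have h2 : Real.Gamma (x+1) = x*Real.Gamma x := Real.Gamma_add_one (ne_of_gt hx0)
    calc Real.Gamma (x+2) = Real.Gamma ((x+1)+1) := by ring_nf
      _ = (x+1)*(x*Real.Gamma x) := by rw [h1, h2]
      _ = (x+1)*x*Real.Gamma x := by ring
  have e2 : Real.Gamma (x+α+2) = (x+α+1)*(x+α)*Real.Gamma (x+α) := by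
    have h1 : Real.Gamma ((x+α+1)+1) = (x+α+1)*Real.Gamma (x+α+1) :=
      Real.Gamma_add_one (by positivity)
    have h2 : Real.Gamma (x+α+1) = (x+α)*Real.Gamma (x+α) :=
      Real.Gamma_add_one (ne_of_gt hxα)
    calc Real.Gamma (x+α+2) = Real.Gamma ((x+α+1)+1) := by ring_nf
      _ = (x+α+1)*((x+α)*Real.Gamma (x+α)) := by rw [h1, h2]
      _ = (x+α+1)*(x+α)*Real.Gamma (x+α) := by ring
  rw [div_le_iff₀ hGa]
  -- Γ x ≤ M * Γ (x+α)
  have key : (x+1)*x*Real.Gamma x ≤ (x+α+1)*(x+α)*Real.Gamma (x+α) := by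
    rw [← e1, ← e2]; exact hG2
  have hfac : (x+α+1)*(x+α) ≤ ((1+α/(2*α-1))*(1+α))*((x+1)*x) := by
    have hq : α ≤ (α/(2*α-1))*x := by
      rw [div_mul_eq_mul_div, le_div_iff₀ hm]
      nlinarith
    have hq0 : (0:ℝ) ≤ α/(2*α-1) := by positivity
    have h1 : x+α ≤ (1+α/(2*α-1))*x := by nlinarith
    have h2 : x+α+1 ≤ (1+α)*(x+1) := by nlinarith
    calc (x+α+1)*(x+α) ≤ ((1+α)*(x+1))*((1+α/(2*α-1))*x) := by
          apply mul_le_mul h2 h1 (by linarith) (by nlinarith)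
      _ = ((1+α/(2*α-1))*(1+α))*((x+1)*x) := by ring
  have h4 : (x+α+1)*(x+α)*Real.Gamma (x+α)
      ≤ ((1+α/(2*α-1))*(1+α))*((x+1)*x)*Real.Gamma (x+α) :=
    mul_le_mul_of_nonneg_right hfac hGa.le
  have h5 : ((x+1)*x)*Real.Gamma x ≤ ((x+1)*x)*(((1+α/(2*α-1))*(1+α))*Real.Gamma (x+α)) := by
    nlinarith [key, h4]
  have h6 : (0:ℝ) < (x+1)*x := by positivity
  exact le_of_mul_le_mul_left h5 h6
lemma bracket_arg (α : ℝ) (hα : 1/2 < α) (hα1 : α < 1) (lam mu : ℂ)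
    (a : ℕ → ℕ → ℂ) (hvan : ∀ k l : ℕ, k < kval l → a k l = 0) (k l : ℕ)
    (hbr : mu * a (k+1) l + lam * dconv a (k+1) l ≠ 0) :
    2*α - 1 ≤ α*((k:ℝ)+1) - l + 1 := by
  have hcases : a (k+1) l ≠ 0 ∨ dconv a (k+1) l ≠ 0 := by
    by_contra h
    push_neg at h
    exact hbr (by rw [h.1, h.2, mul_zero, mul_zero, add_zero])
  have hk0 : (0:ℝ) ≤ (k:ℝ) := Nat.cast_nonneg k
  rcases hcases with hA | hB
  · have hkv : kval l ≤ k+1 := by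
      by_contra hc
      exact hA (hvan _ _ (Nat.not_le.mp hc))
    have hkv' : max (2*l-1) 1 ≤ k+1 := hkv
    obtain ⟨hh1, hh2⟩ := Nat.max_le.mp hkv'
    have h2l : 2*l ≤ k+2 := by omega
    have h2l' : 2*(l:ℝ) ≤ (k:ℝ)+2 := by exact_mod_cast h2l
    nlinarith [mul_nonneg (by linarith : (0:ℝ) ≤ α - 1/2) hk0]
  · have hBsum : (∑ k₁ ∈ Finset.Ico 1 (k+1), ∑ l₁ ∈ Finset.range (l + 1),
        a k₁ l₁ * a (k+1 - k₁) (l - l₁)) ≠ 0 := hB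
    obtain ⟨k₁, hk₁, hne1⟩ := Finset.exists_ne_zero_of_sum_ne_zero hBsum
    obtain ⟨l₁, hl₁, hne2⟩ := Finset.exists_ne_zero_of_sum_ne_zero hne1
    obtain ⟨hz1, hz2⟩ := mul_ne_zero_iff.mp hne2
    have hv1 : kval l₁ ≤ k₁ := by
      by_contra hc; exact hz1 (hvan _ _ (Nat.not_le.mp hc))
    have hv2 : kval (l - l₁) ≤ k+1-k₁ := by
      by_contra hc; exact hz2 (hvan _ _ (Nat.not_le.mp hc))
    obtain ⟨hA1, hA2⟩ := Nat.max_le.mp (show max (2*l₁-1) 1 ≤ k₁ from hv1)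
    obtain ⟨hB1, hB2⟩ := Nat.max_le.mp (show max (2*(l-l₁)-1) 1 ≤ k+1-k₁ from hv2)
    rw [Finset.mem_Ico] at hk₁
    rw [Finset.mem_range] at hl₁
    have h2l : 2*l ≤ k+3 := by omega
    have hk1 : 1 ≤ k := by omega
    have h2l' : 2*(l:ℝ) ≤ (k:ℝ)+3 := by exact_mod_cast h2l
    have hk1' : (1:ℝ) ≤ (k:ℝ) := by exact_mod_cast hk1
    nlinarith [mul_nonneg (by linarith : (0:ℝ) ≤ α - 1/2) (by linarith : (0:ℝ) ≤ (k:ℝ) - 1)]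

lemma dconv_bound (a : ℕ → ℕ → ℂ) (C ρ : ℝ) (hC : 0 < C) (hρ : 0 < ρ) (k l : ℕ)
    (H : ∀ k' l' : ℕ, k' ≤ k + 1 →
      ‖a k' l'‖ ≤ C*ρ^k'/((((k':ℕ):ℝ)+1)^2*(((l':ℕ):ℝ)+1)^2)) :
    ‖dconv a (k+1) l‖ ≤ 256*(C*C)*ρ^(k+1)/(((k:ℝ)+2)^2*((l:ℝ)+1)^2) := by
  have hterm : ∀ k₁ ∈ Finset.Ico 1 (k+1), ∀ l₁ ∈ Finset.range (l+1),
      ‖a k₁ l₁ * a (k+1-k₁) (l-l₁)‖ ≤ (C*C*ρ^(k+1)) *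
        ((1/((((k₁:ℕ):ℝ)+1)^2*(((k+1-k₁:ℕ):ℝ)+1)^2)) *
         (1/((((l₁:ℕ):ℝ)+1)^2*(((l-l₁:ℕ):ℝ)+1)^2))) := by
    intro k₁ hk₁ l₁ hl₁
    rw [Finset.mem_Ico] at hk₁
    rw [norm_mul]
    have e1 := H k₁ l₁ (by omega)
    have e2 := H (k+1-k₁) (l-l₁) (by omega)
    have hprod := mul_le_mul e1 e2 (norm_nonneg _) (by positivity)
    refine hprod.trans (le_of_eq ?_)
    have epow : ρ^k₁ * ρ^(k+1-k₁) = ρ^(k+1) := by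
      rw [← pow_add]
      congr 1
      omega
    rw [div_mul_div_comm, ← epow]
    have d1 : ((((k₁:ℕ):ℝ)+1)^2*(((l₁:ℕ):ℝ)+1)^2) ≠ 0 := by positivity
    have d2 : ((((k+1-k₁:ℕ):ℝ)+1)^2*(((l-l₁:ℕ):ℝ)+1)^2) ≠ 0 := by positivity
    field_simp
  have hSL : ∑ l₁ ∈ Finset.range (l+1),
      (1:ℝ)/((((l₁:ℕ):ℝ)+1)^2*(((l-l₁:ℕ):ℝ)+1)^2) ≤ 16/((l:ℝ)+1)^2 := by
    refine (conv_sum_le l).trans ?_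
    gcongr
    all_goals first | positivity | linarith
  have hSK : ∑ k₁ ∈ Finset.Ico 1 (k+1),
      (1:ℝ)/((((k₁:ℕ):ℝ)+1)^2*(((k+1-k₁:ℕ):ℝ)+1)^2) ≤ 16/((k:ℝ)+2)^2 := by
    have step1 : ∑ k₁ ∈ Finset.Ico 1 (k+1),
        (1:ℝ)/((((k₁:ℕ):ℝ)+1)^2*(((k+1-k₁:ℕ):ℝ)+1)^2)
        ≤ ∑ k₁ ∈ Finset.Ico 1 (k+1),
        (1:ℝ)/((((k₁:ℕ):ℝ)+1)^2*(((k-k₁:ℕ):ℝ)+1)^2) := by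
      refine Finset.sum_le_sum fun k₁ hk₁ => ?_
      rw [Finset.mem_Ico] at hk₁
      have e : k+1-k₁ = (k-k₁)+1 := by omega
      rw [e]
      push_cast
      gcongr
      all_goals first | positivity | linarith
    refine step1.trans ?_
    refine le_trans (Finset.sum_le_sum_of_subset_of_nonneg ?_ ?_) (conv_sum_le k)
    · intro x hx
      rw [Finset.mem_Ico] at hx
      rw [Finset.mem_range]
      omega
    · intro x _ _
      positivity
  have h1 : ‖dconv a (k+1) l‖ ≤ ∑ k₁ ∈ Finset.Ico 1 (k+1), ∑ l₁ ∈ Finset.range (l+1),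
      ‖a k₁ l₁ * a (k+1-k₁) (l-l₁)‖ := by
    refine (norm_sum_le _ _).trans (Finset.sum_le_sum fun k₁ _ => ?_)
    exact norm_sum_le _ _
  calc ‖dconv a (k+1) l‖
      ≤ ∑ k₁ ∈ Finset.Ico 1 (k+1), ∑ l₁ ∈ Finset.range (l+1),
        (C*C*ρ^(k+1)) * ((1/((((k₁:ℕ):ℝ)+1)^2*(((k+1-k₁:ℕ):ℝ)+1)^2)) *
         (1/((((l₁:ℕ):ℝ)+1)^2*(((l-l₁:ℕ):ℝ)+1)^2))) := by
        refine h1.trans (Finset.sum_le_sum fun k₁ hk₁ => Finset.sum_le_sum fun l₁ hl₁ => ?_)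
        exact hterm k₁ hk₁ l₁ hl₁
    _ = (C*C*ρ^(k+1)) * ((∑ k₁ ∈ Finset.Ico 1 (k+1),
          (1:ℝ)/((((k₁:ℕ):ℝ)+1)^2*(((k+1-k₁:ℕ):ℝ)+1)^2)) *
        (∑ l₁ ∈ Finset.range (l+1),
          (1:ℝ)/((((l₁:ℕ):ℝ)+1)^2*(((l-l₁:ℕ):ℝ)+1)^2))) := by
        rw [Finset.sum_mul_sum, Finset.mul_sum]
        refine Finset.sum_congr rfl fun k₁ _ => ?_
        rw [Finset.mul_sum]
    _ ≤ (C*C*ρ^(k+1)) * ((16/((k:ℝ)+2)^2) * (16/((l:ℝ)+1)^2)) := by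
        have hnn1 : (0:ℝ) ≤ ∑ l₁ ∈ Finset.range (l+1),
            (1:ℝ)/((((l₁:ℕ):ℝ)+1)^2*(((l-l₁:ℕ):ℝ)+1)^2) :=
          Finset.sum_nonneg fun _ _ => by positivity
        have hnn2 : (0:ℝ) ≤ 16/((k:ℝ)+2)^2 := by positivity
        refine mul_le_mul_of_nonneg_left ?_ (by positivity)
        exact mul_le_mul hSK hSL hnn1 hnn2
    _ = 256*(C*C)*ρ^(k+1)/(((k:ℝ)+2)^2*((l:ℝ)+1)^2) := by
        field_simp
        ring

set_option maxHeartbeats 2000000 in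
lemma main_bound (α : ℝ) (hα : 1/2 < α) (hα1 : α < 1)
    (lam mu nu u : ℂ) (a : ℕ → ℕ → ℂ) (ha : IsDoubleRiccatiSeq α lam mu nu u a) :
    ∃ C ρ : ℝ, 1 ≤ C ∧ 1 ≤ ρ ∧ ∀ k l : ℕ,
      ‖a k l‖ ≤ C * ρ^k / (((k:ℝ)+1)^2 * ((l:ℝ)+1)^2) := by
  obtain ⟨ha1, ha2, ha3, ha4, ha5⟩ := ha
  set M : ℝ := (1+α/(2*α-1))*(1+α) with hMdef
  have hm : (0:ℝ) < 2*α-1 := by linarith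
  have hM0 : (0:ℝ) < M := by
    have : (0:ℝ) < 1+α/(2*α-1) := by positivity
    nlinarith
  set C : ℝ := 16*(‖a 1 0‖ + ‖a 1 1‖) + 16 with hCdef
  have hC16 : (16:ℝ) ≤ C := by
    have := norm_nonneg (a 1 0); have := norm_nonneg (a 1 1); simp only [hCdef]; nlinarith
  have hC0 : (0:ℝ) < C := by linarith
  set ρ : ℝ := 4*M*(‖mu‖ + 256*‖lam‖*C) + 1 with hρdef
  have hρ1 : (1:ℝ) ≤ ρ := by
    have h1 : (0:ℝ) ≤ ‖mu‖ + 256*‖lam‖*C := by positivity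
    simp only [hρdef]; nlinarith
  have hρ0 : (0:ℝ) < ρ := by linarith
  have hρkey : M*(‖mu‖ + 256*‖lam‖*C) ≤ ρ/4 := by simp only [hρdef]; nlinarith
  clear_value M C ρ
  refine ⟨C, ρ, le_trans (by norm_num) hC16, hρ1, ?_⟩
  intro k
  induction k using Nat.strong_induction_on with
  | _ k IH =>
  intro l
  rcases k with _ | _ | k
  · -- k = 0
    have h0 : a 0 l = 0 := ha4 0 l (lt_of_lt_of_le one_pos (le_max_right _ _))
    rw [h0, norm_zero]
    positivity
  · -- k = 1
    rcases l with _ | _ | l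
    · -- l = 0
      have : ‖a 1 0‖ ≤ C/16 := by
        simp only [hCdef]; nlinarith [norm_nonneg (a 1 0), norm_nonneg (a 1 1)]
      have hrr : C ≤ C * ρ := by nlinarith
      push_cast
      rw [show ((1:ℝ)+1)^2 * ((0:ℝ)+1)^2 = 4 by norm_num, pow_one]
      nlinarith [this, hrr]
    · -- l = 1
      have : ‖a 1 1‖ ≤ C/16 := by
        simp only [hCdef]; nlinarith [norm_nonneg (a 1 0), norm_nonneg (a 1 1)]
      have hrr : C ≤ C * ρ := by nlinarith
      push_cast
      rw [show ((1:ℝ)+1)^2 * ((1:ℝ)+1)^2 = 16 by norm_num, pow_one]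
      nlinarith [this, hrr]
    · -- l ≥ 2
      have h0 : a 1 (l+2) = 0 := ha3 (l+2) (by omega)
      rw [h0, norm_zero]; positivity
  · -- k + 2
    by_cases hlt : k + 1 + 1 < kval l
    · rw [ha4 _ l hlt, norm_zero]; positivity
    · have hmax : max (kval l) 2 ≤ k + 1 + 1 := max_le (Nat.not_lt.mp hlt) (by omega)
      rw [ha5 l (k+1+1) hmax]
      simp only [Nat.add_sub_cancel]
      set br : ℂ := mu * a (k+1) l + lam * dconv a (k+1) l with hbrdef
      by_cases hbr : br = 0
      · rw [hbr, zero_mul, norm_zero]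
        positivity
      · have hx : 2*α - 1 ≤ α*((k:ℝ)+1) - l + 1 :=
          bracket_arg α hα hα1 lam mu a ha4 k l (hbrdef ▸ hbr)
        rw [norm_mul, Complex.norm_real, Real.norm_eq_abs]
        push_cast
        rw [show α*((k:ℝ)+1+1) - (l:ℝ) + 1 = (α*((k:ℝ)+1+1-1) - (l:ℝ) + 1) + α by ring]
        set X : ℝ := α*((k:ℝ)+1+1-1) - (l:ℝ) + 1 with hXdef
        have hxX : 2*α - 1 ≤ X := by
          rw [hXdef, show (k:ℝ)+1+1-1 = (k:ℝ)+1 by ring]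
          exact hx
        have hXpos : 0 < X := lt_of_lt_of_le hm hxX
        have hGle : Real.Gamma X / Real.Gamma (X+α) ≤ M := by
          rw [hMdef]; exact gamma_ratio_le α X hα hα1 hxX
        have hGnn : 0 ≤ Real.Gamma X / Real.Gamma (X+α) :=
          div_nonneg (Real.Gamma_pos_of_pos hXpos).le
            (Real.Gamma_pos_of_pos (by linarith)).le
        rw [abs_of_nonneg hGnn]
        have hbound1 : ‖a (k+1) l‖ ≤ C*ρ^(k+1)/(((k:ℝ)+2)^2*((l:ℝ)+1)^2) := by
          have h := IH (k+1) (by omega) l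
          push_cast at h
          calc ‖a (k+1) l‖ ≤ C * ρ^(k+1) / (((k:ℝ)+1+1)^2*((l:ℝ)+1)^2) := h
            _ = C*ρ^(k+1)/(((k:ℝ)+2)^2*((l:ℝ)+1)^2) := by
                rw [show (k:ℝ)+1+1 = (k:ℝ)+2 by ring]
        have hdconv : ‖dconv a (k+1) l‖ ≤ 256*(C*C)*ρ^(k+1)/(((k:ℝ)+2)^2*((l:ℝ)+1)^2) :=
          dconv_bound a C ρ hC0 hρ0 k l (fun k' l' hk' => IH k' (by omega) l')
        have hb : ‖br‖ ≤ ‖mu‖ * ‖a (k+1) l‖ + ‖lam‖ * ‖dconv a (k+1) l‖ := by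
          rw [hbrdef]
          exact (norm_add_le _ _).trans (by rw [norm_mul, norm_mul])
        set E : ℝ := ((k:ℝ)+2)^2*((l:ℝ)+1)^2 with hEdef
        have hE : (0:ℝ) < E := by rw [hEdef]; positivity
        clear_value E
        calc ‖br‖ * (Real.Gamma X / Real.Gamma (X+α))
            ≤ ‖br‖ * M := mul_le_mul_of_nonneg_left hGle (norm_nonneg _)
          _ ≤ (‖mu‖ * (C*ρ^(k+1)/E) + ‖lam‖ * (256*(C*C)*ρ^(k+1)/E)) * M := by
              apply mul_le_mul_of_nonneg_right _ hM0.le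
              refine hb.trans (add_le_add ?_ ?_)
              · exact mul_le_mul_of_nonneg_left hbound1 (norm_nonneg _)
              · exact mul_le_mul_of_nonneg_left hdconv (norm_nonneg _)
          _ = (M*(‖mu‖ + 256*‖lam‖*C)) * (C*ρ^(k+1)/E) := by ring
          _ ≤ (ρ/4) * (C*ρ^(k+1)/E) :=
              mul_le_mul_of_nonneg_right hρkey (by positivity)
          _ = C*ρ^(k+1+1)/(4*E) := by rw [pow_succ]; ring
          _ ≤ C*ρ^(k+1+1)/(((k:ℝ)+1+1+1)^2*((l:ℝ)+1)^2) := by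
              rw [hEdef, div_le_div_iff₀ (by positivity) (by positivity)]
              have h1 : ((k:ℝ)+1+1+1)^2 ≤ 4*((k:ℝ)+2)^2 := by
                nlinarith [(by positivity : (0:ℝ) ≤ (k:ℝ))]
              have h2 : (0:ℝ) ≤ C*ρ^(k+1+1) := by positivity
              nlinarith [mul_le_mul_of_nonneg_right
                (mul_le_mul_of_nonneg_right h1 (sq_nonneg ((l:ℝ)+1))) h2]

lemma aux_pow (α : ℝ) (hα1 : α < 1) (n j : ℕ) (h1 : 1 ≤ n) (h2 : (n:ℝ) ≤ 2^j) :
    1 ≤ ((2:ℝ)^(1-α/2))^j * (n:ℝ)^(α/2-1) := by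
  have hd : (0:ℝ) < 1 - α/2 := by linarith
  have hn : (0:ℝ) < n := by exact_mod_cast h1
  have e1 : (n:ℝ)^(α/2-1) = ((n:ℝ)^(1-α/2))⁻¹ := by
    rw [show α/2-1 = -(1-α/2) by ring, Real.rpow_neg hn.le]
  have e2 : ((2:ℝ)^(1-α/2))^j = (2:ℝ)^((1-α/2)*(j:ℝ)) := by
    rw [← Real.rpow_natCast ((2:ℝ)^(1-α/2)) j, ← Real.rpow_mul (by norm_num)]
  have key : (n:ℝ)^(1-α/2) ≤ (2:ℝ)^((1-α/2)*(j:ℝ)) := by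
    have h3 : (n:ℝ)^(1-α/2) ≤ ((2:ℝ)^(j:ℕ))^(1-α/2) :=
      Real.rpow_le_rpow hn.le h2 hd.le
    refine h3.trans (le_of_eq ?_)
    rw [← Real.rpow_natCast (2:ℝ) j, ← Real.rpow_mul (by norm_num), mul_comm]
  rw [e1, e2, ← div_eq_mul_inv, le_div_iff₀ (Real.rpow_pos_of_pos hn _)]
  linarith

set_option maxHeartbeats 1000000 in
lemma summable_aux (c q : ℝ) (hc : 0 ≤ c) (hq0 : 0 ≤ q) (hq1 : q < 1) :
    Summable (fun p : ℕ × ℕ => (c * q^p.1) * (1/((p.2:ℝ)+1)^2)) := by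
  have hf : Summable (fun k : ℕ => c * q^k) :=
    (summable_geometric_of_lt_one hq0 hq1).mul_left c
  have hg : Summable (fun l : ℕ => 1/((l:ℝ)+1)^2) := by
    have h := Real.summable_one_div_nat_pow.mpr (le_refl 2)
    have h2 := (summable_nat_add_iff 1).mpr h
    refine h2.congr fun n => ?_
    push_cast
    ring
  exact hf.mul_of_nonneg hg (fun k => by positivity) (fun l => by positivity)
set_option maxHeartbeats 1000000 in
theorem stmt_16 (α : ℝ) (hα : 1/2 < α) (hα1 : α < 1)
    (lam mu nu u : ℂ)
    (a : ℕ → ℕ → ℂ) (ha : IsDoubleRiccatiSeq α lam mu nu u a) :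
    ∃ C θ ρ : ℝ, 0 < C ∧ 0 < θ ∧ 0 < ρ ∧
      (∀ l k : ℕ, kval l ≤ k →
        ‖a k l‖ ≤ C * θ ^ l * ρ ^ k * ((k - kval l + 1 : ℕ) : ℝ) ^ (α/2 - 1) *
          ((max l 1 : ℕ) : ℝ) ^ (α/2 - 1)) ∧
      ∃ R : ℝ, 0 < R ∧ ∀ t : ℝ, 0 < t → t < R →
        Summable fun p : ℕ × ℕ => ‖a p.1 p.2‖ * t ^ (α * (p.1:ℝ) - (p.2:ℝ)) := by
  obtain ⟨C, ρ, hC1, hρ1, hbd⟩ := main_bound α hα hα1 lam mu nu u a ha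
  have hC0 : (0:ℝ) < C := by linarith
  have hρ0 : (0:ℝ) < ρ := by linarith
  have hβ0 : (0:ℝ) < (2:ℝ)^(1-α/2) := Real.rpow_pos_of_pos (by norm_num) _
  set β : ℝ := (2:ℝ)^(1-α/2) with hβdef
  have hsimple : ∀ k l : ℕ, ‖a k l‖ ≤ C * ρ^k := by
    intro k l
    refine (hbd k l).trans ?_
    apply div_le_self (by positivity)
    have hk0 : (0:ℝ) ≤ (k:ℝ) := Nat.cast_nonneg k
    have hl0 : (0:ℝ) ≤ (l:ℝ) := Nat.cast_nonneg l
    have e1 : (1:ℝ) ≤ ((k:ℝ)+1)^2 := by nlinarith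
    have e2 : (1:ℝ) ≤ ((l:ℝ)+1)^2 := by nlinarith
    nlinarith [e1, e2]
  refine ⟨C, β, ρ*β, hC0, hβ0, by positivity, ?_, ?_⟩
  · intro l k hkl
    have hA2 : ((k - kval l + 1:ℕ):ℝ) ≤ 2^k := by
      have h1 : k + 1 ≤ 2^k := Nat.succ_le_of_lt (Nat.lt_two_pow_self (n := k))
      have h2 : k - kval l + 1 ≤ 2^k := le_trans (by omega) h1
      calc ((k - kval l + 1:ℕ):ℝ) ≤ ((2^k:ℕ):ℝ) := by exact_mod_cast h2
        _ = 2^k := by push_cast; ring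
    have hB2 : ((max l 1:ℕ):ℝ) ≤ 2^l := by
      have h1 : max l 1 ≤ 2^l := max_le (Nat.lt_two_pow_self (n := l)).le Nat.one_le_two_pow
      calc ((max l 1:ℕ):ℝ) ≤ ((2^l:ℕ):ℝ) := by exact_mod_cast h1
        _ = 2^l := by push_cast; ring
    have hk := aux_pow α hα1 (k - kval l + 1) k (by omega) hA2
    have hl := aux_pow α hα1 (max l 1) l (le_max_right _ _) hB2
    have base : (0:ℝ) ≤ C * ρ^k := by positivity
    calc ‖a k l‖ ≤ C * ρ^k := hsimple k l
      _ = (C * ρ^k) * (1*1) := by ring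
      _ ≤ (C * ρ^k) * ((β^l * ((max l 1:ℕ):ℝ)^(α/2-1)) *
            (β^k * ((k - kval l + 1:ℕ):ℝ)^(α/2-1))) := by
          refine mul_le_mul_of_nonneg_left ?_ base
          exact mul_le_mul hl hk zero_le_one (le_trans zero_le_one hl)
      _ = C * β^l * (ρ*β)^k * ((k - kval l + 1:ℕ):ℝ)^(α/2-1) *
            ((max l 1:ℕ):ℝ)^(α/2-1) := by
          rw [mul_pow]; ring
  · -- summability
    have hε : (0:ℝ) < α - 1/2 := by linarith
    set R : ℝ := (1/(2*ρ))^((α-1/2)⁻¹) with hRdef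
    have hR0 : 0 < R := Real.rpow_pos_of_pos (by positivity) _
    have hhalf : 1/(2*ρ) ≤ 1 := by
      rw [div_le_one (by positivity)]; linarith
    have hR1 : R ≤ 1 := Real.rpow_le_one (by positivity) hhalf (by positivity)
    refine ⟨R, hR0, fun t ht htR => ?_⟩
    have ht1 : t ≤ 1 := le_of_lt (lt_of_lt_of_le htR hR1)
    have htkey : t^(α-1/2) ≤ 1/(2*ρ) := by
      have h1 : t^(α-1/2) ≤ R^(α-1/2) := Real.rpow_le_rpow ht.le htR.le (by linarith)
      rwa [hRdef, Real.rpow_inv_rpow (by positivity) (by linarith : α-1/2 ≠ 0)] at h1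
    have htm : (0:ℝ) ≤ t^(-(1:ℝ)/2) := Real.rpow_nonneg ht.le _
    refine Summable.of_nonneg_of_le (fun p => ?_) (fun p => ?_)
      (summable_aux (C*t^(-(1:ℝ)/2)) (1/2) (mul_nonneg hC0.le htm) (by norm_num) (by norm_num))
    · exact mul_nonneg (norm_nonneg _) (Real.rpow_nonneg ht.le _)
    · obtain ⟨k, l⟩ := p
      dsimp only
      by_cases hkl : k < kval l
      · rw [ha.2.2.2.1 k l hkl, norm_zero, zero_mul]
        positivity
      · push_neg at hkl
        have h2l : 2*l ≤ k+1 := by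
          obtain ⟨h1, h2⟩ := Nat.max_le.mp (show max (2*l-1) 1 ≤ k from hkl)
          omega
        have hsplit : t^(α*(k:ℝ)-(l:ℝ)) = t^((α-1/2)*(k:ℝ)) * t^((k:ℝ)/2-(l:ℝ)) := by
          rw [← Real.rpow_add ht]; congr 1; ring
        have h3 : t^((k:ℝ)/2-(l:ℝ)) ≤ t^(-(1:ℝ)/2) := by
          apply Real.rpow_le_rpow_of_exponent_ge ht ht1
          have : 2*(l:ℝ) ≤ (k:ℝ)+1 := by exact_mod_cast h2l
          linarith
        have h4 : t^((α-1/2)*(k:ℝ)) = (t^(α-1/2))^k := by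
          rw [← Real.rpow_natCast (t^(α-1/2)) k, ← Real.rpow_mul ht.le]
        have h5 : (t^(α-1/2))^k ≤ (1/(2*ρ))^k :=
          pow_le_pow_left₀ (Real.rpow_nonneg ht.le _) htkey k
        have hρhalf : ρ^k*(1/(2*ρ))^k = (1/2:ℝ)^k := by
          rw [← mul_pow]; congr 1; field_simp
        calc ‖a k l‖ * t^(α*(k:ℝ)-(l:ℝ))
            ≤ (C*ρ^k/(((k:ℝ)+1)^2*((l:ℝ)+1)^2)) * ((1/(2*ρ))^k * t^(-(1:ℝ)/2)) := by
              refine mul_le_mul (hbd k l) ?_ (Real.rpow_nonneg ht.le _) (by positivity)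
              rw [hsplit, h4]
              exact mul_le_mul h5 h3 (Real.rpow_nonneg ht.le _) (by positivity)
          _ = ((C*t^(-(1:ℝ)/2))*(1/2:ℝ)^k) * (1/(((k:ℝ)+1)^2*((l:ℝ)+1)^2)) := by
              rw [← hρhalf]; ring
          _ ≤ ((C*t^(-(1:ℝ)/2))*(1/2:ℝ)^k) * (1/((l:ℝ)+1)^2) := by
              refine mul_le_mul_of_nonneg_left ?_ (by positivity)
              apply one_div_le_one_div_of_le (by positivity)
              have hk0 : (0:ℝ) ≤ (k:ℝ) := Nat.cast_nonneg k
              have e1 : (1:ℝ) ≤ ((k:ℝ)+1)^2 := by nlinarith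
              nlinarith [mul_le_mul_of_nonneg_right e1 (sq_nonneg ((l:ℝ)+1))]
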